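/- Let ξ be an integrable real-valued random variable with cumulative distribution function φ(y) = P(ξ ≤ y). Then the function F(y) = E[max(y − ξ, 0)] has at every point y a right derivative (derivative within [y, ∞)) equal to φ(y). -/

import Mathlib

open MeasureTheory Filter Set Topology

/-- For an integrable random variable `ξ` with cdf `φ(y) = P(ξ ≤ y)`, the function
`F(y) = E[(y − ξ)⁺]` has right derivative `φ(y)` at every point `y`. -/

theorem stmt13 {Ω : Type*} [MeasurableSpace Ω] (μ : Measure Ω) [IsProbabilityMeasure μ]
    (ξ : Ω → ℝ) (hξ : Integrable ξ μ) (y : ℝ) :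
    HasDerivWithinAt (fun z : ℝ => ∫ ω, max (z - ξ ω) 0 ∂μ)
      ((μ {ω | ξ ω ≤ y}).toReal) (Set.Ici y) y := by
  -- replace ξ by a strongly measurable representative
  set ξ' := hξ.1.mk ξ with hξ'def
  have hξ'm : StronglyMeasurable ξ' := hξ.1.stronglyMeasurable_mk
  have hξeq : ξ =ᵐ[μ] ξ' := hξ.1.ae_eq_mk
  have hξ' : Integrable ξ' μ := hξ.congr hξeq
  have hFeq : (fun z : ℝ => ∫ ω, max (z - ξ ω) 0 ∂μ)
      = fun z : ℝ => ∫ ω, max (z - ξ' ω) 0 ∂μ := by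
    funext z
    exact integral_congr_ae (hξeq.mono fun ω h => by simp only [h])
  have hμeq : μ {ω | ξ ω ≤ y} = μ {ω | ξ' ω ≤ y} := by
    apply measure_congr
    exact hξeq.mono fun ω h => by show (ξ ω ≤ y) = (ξ' ω ≤ y); rw [h]
  rw [hFeq, hμeq]
  -- integrability of the positive parts
  have hint : ∀ z : ℝ, Integrable (fun ω => max (z - ξ' ω) 0) μ := fun z =>
    ((integrable_const z).sub hξ').pos_part
  have hset : MeasurableSet {ω | ξ' ω ≤ y} := hξ'm.measurable measurableSet_Iic
  rw [hasDerivWithinAt_iff_tendsto_slope, Set.Ici_sdiff_left]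
  -- the slope equals the integral of g z
  set g : ℝ → Ω → ℝ := fun z ω => (max (z - ξ' ω) 0 - max (y - ξ' ω) 0) / (z - y) with hg
  have hslope : ∀ z ∈ Ioi y,
      slope (fun z : ℝ => ∫ ω, max (z - ξ' ω) 0 ∂μ) y z = ∫ ω, g z ω ∂μ := by
    intro z hz
    rw [slope_def_field]
    rw [← integral_sub (hint z) (hint y), ← integral_div]
  have hlim : Tendsto (fun z => ∫ ω, g z ω ∂μ) (𝓝[>] y)
      (𝓝 ((μ {ω | ξ' ω ≤ y}).toReal)) := by
    have : (μ {ω | ξ' ω ≤ y}).toReal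
        = ∫ ω, Set.indicator {ω | ξ' ω ≤ y} (fun _ => (1:ℝ)) ω ∂μ := by
      rw [integral_indicator_const _ hset]; simp; rfl
    rw [this]
    apply tendsto_integral_filter_of_dominated_convergence (fun _ => (1:ℝ))
    · filter_upwards with z
      exact ((((measurable_const.sub hξ'm.measurable).max measurable_const).sub
        ((measurable_const.sub hξ'm.measurable).max measurable_const)).div_const
        _).aestronglyMeasurable
    · filter_upwards [self_mem_nhdsWithin] with z hz
      filter_upwards with ω
      have hzy : (0:ℝ) < z - y := by simp [Set.mem_Ioi] at hz; linarith
      have h1 : max (y - ξ' ω) 0 ≤ max (z - ξ' ω) 0 :=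
        max_le_max (by linarith [hz.out]) le_rfl
      have h2 : max (z - ξ' ω) 0 - max (y - ξ' ω) 0 ≤ z - y := by
        rcases le_or_gt (z - ξ' ω) 0 with h | h
        · have hy0 : max (y - ξ' ω) 0 = 0 := max_eq_right (by simp only [Set.mem_Ioi] at hz; linarith)
          have hz0 : max (z - ξ' ω) 0 = 0 := max_eq_right h
          rw [hy0, hz0]; linarith
        · rw [max_eq_left h.le]
          have := le_max_left (y - ξ' ω) 0
          linarith
      rw [hg]
      simp only [Real.norm_eq_abs, abs_div, abs_of_pos hzy,
        abs_of_nonneg (sub_nonneg.mpr h1)]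
      rw [div_le_one hzy]
      exact h2
    · exact integrable_const 1
    · filter_upwards with ω
      rcases le_or_gt (ξ' ω) y with h | h
      · have : Set.indicator {ω | ξ' ω ≤ y} (fun _ => (1:ℝ)) ω = 1 := by
          simp [Set.indicator_of_mem, h]
        rw [this]
        apply Tendsto.congr' _ tendsto_const_nhds
        filter_upwards [self_mem_nhdsWithin] with z hz
        have hzy : (0:ℝ) < z - y := by simp [Set.mem_Ioi] at hz; linarith
        rw [hg]
        have h1 : max (z - ξ' ω) 0 = z - ξ' ω := max_eq_left (by linarith)
        have h2 : max (y - ξ' ω) 0 = y - ξ' ω := max_eq_left (by linarith)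
        simp only [h1, h2]
        field_simp
        ring
      · have : Set.indicator {ω | ξ' ω ≤ y} (fun _ => (1:ℝ)) ω = 0 := by
          simp [Set.indicator_of_notMem, not_le.mpr h]
        rw [this]
        apply Tendsto.congr' _ tendsto_const_nhds
        have hmem : Iio (ξ' ω) ∈ 𝓝[>] y := nhdsWithin_le_nhds (Iio_mem_nhds h)
        filter_upwards [hmem] with z hz
        rw [hg]
        have h1 : max (z - ξ' ω) 0 = 0 := max_eq_right (by simp [Set.mem_Iio] at hz; linarith)
        have h2 : max (y - ξ' ω) 0 = 0 := max_eq_right (by linarith)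
        simp [h1, h2]
  apply hlim.congr'
  filter_upwards [self_mem_nhdsWithin] with z hz
  exact (hslope z hz).symm
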